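/- Let K be a commutative ring with unity, a, b two distinct letters, u a word over {a, b}, and k, l nonnegative integers. Then λ(a^k b u b a^l) = (−1)^{k+1} Σ_{i=0}^{l} C(k+i, i) λ(u b a^{l−i}) · b a^{k+i} + Σ_{j=0}^{k} (−1)^j C(l+j, j) λ(a^{k−j} b u) · b a^{l+j}, where the products are concatenation products in K⟨{a,b}⟩ and C(·,·) are binomial coefficients. -/

import Mathlib

open scoped BigOperators
open Classical

noncomputable section

attribute [local instance] LieRing.ofAssociativeRing

/-- The free associative algebra `K⟨A⟩` on the alphabet `A`, realized as the monoid algebra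
of the free monoid on `A`. -/
abbrev NC (K A : Type*) [CommRing K] : Type _ := MonoidAlgebra K (FreeMonoid A)

variable (K A : Type*) [CommRing K]

/-- The monomial (word) `w` viewed as an element of `K⟨A⟩`. -/
def wp (w : List A) : NC K A := MonoidAlgebra.single (FreeMonoid.ofList w) 1

/-- The coefficient `(P, w)` of the word `w` in the polynomial `P`. -/
def coeffW (P : NC K A) (w : List A) : K := P.coeff (FreeMonoid.ofList w)

/-- The canonical scalar product `(P, Q) = ∑_w (P, w)(Q, w)` on `K⟨A⟩`. -/
def sp (P Q : NC K A) : K := Finsupp.sum P.coeff fun w c => c * Q.coeff w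

/-- The free Lie algebra `L_K(A)`: the Lie subalgebra of `K⟨A⟩` (with the commutator
bracket) generated by the letters. -/
def freeLie : LieSubalgebra K (NC K A) :=
  LieSubalgebra.lieSpan K (NC K A) (Set.range fun a : A => wp K A [a])

/-- The adjoint `λ` of the left-normed Lie bracketing, on words:
`λ(ε) = 0`, `λ(a) = a`, `λ(aub) = λ(au)b − λ(ub)a`. -/
def lam : List A → NC K A
  | [] => 0
  | [a] => wp K A [a]
  | a :: b :: t =>
      lam (a :: (b :: t).dropLast) * wp K A [(b :: t).getLast (by simp)] -
        lam (b :: t) * wp K A [a]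
  termination_by w => w.length
  decreasing_by
    all_goals simp [List.length_dropLast]

/-- `λ` extended linearly to the whole of `K⟨A⟩`. -/
def lamLin : NC K A →ₗ[K] NC K A :=
  (Finsupp.linearCombination K fun w : FreeMonoid A => lam K A (FreeMonoid.toList w)) ∘ₗ
    (MonoidAlgebra.coeffLinearEquiv (R := K) (S := K) (M := FreeMonoid A)).toLinearMap

/-- The shuffle product of two words, as an element of `K⟨A⟩`. -/
def shuffleW : List A → List A → NC K A
  | [], v => wp K A v
  | u, [] => wp K A u
  | a :: u, b :: v =>
      wp K A [a] * shuffleW u (b :: v) + wp K A [b] * shuffleW (a :: u) v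
  termination_by u v => u.length + v.length
  decreasing_by
    all_goals simp [Nat.lt_succ_iff]

/-- The shuffle product on `K⟨A⟩`, extended bilinearly. -/
def sh (P Q : NC K A) : NC K A :=
  Finsupp.sum P.coeff fun u cu =>
    Finsupp.sum Q.coeff fun v cv =>
      (cu * cv) • shuffleW K A (FreeMonoid.toList u) (FreeMonoid.toList v)

/-- The right residual `P ▷ q` of `P` by a word `q`: `(P ▷ q, w) = (P, qw)`. -/
def rresW (P : NC K A) (q : List A) : NC K A :=
  Finsupp.sum P.coeff fun u c =>
    if q <+: FreeMonoid.toList u then c • wp K A ((FreeMonoid.toList u).drop q.length) else 0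

/-- The right residual `P ▷ Q`: `(P ▷ Q, w) = (P, Qw)`. -/
def rres (P Q : NC K A) : NC K A :=
  Finsupp.sum Q.coeff fun v c => c • rresW K A P (FreeMonoid.toList v)

/-- Auxiliary left residual by a word `q`: `(q ◁ P, w) = (P, wq)`. -/
def lresW (P : NC K A) (q : List A) : NC K A :=
  Finsupp.sum P.coeff fun u c =>
    if q <:+ FreeMonoid.toList u then
      c • wp K A ((FreeMonoid.toList u).take ((FreeMonoid.toList u).length - q.length))
    else 0

/-- The left residual `Q ◁ P`: `(Q ◁ P, w) = (P, wQ)`. -/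
def lres (Q P : NC K A) : NC K A :=
  Finsupp.sum Q.coeff fun v c => c • lresW K A P (FreeMonoid.toList v)

/-- The number of trailing occurrences of the letter `a` in the word `v`. -/
def trailCount (a : A) (v : FreeMonoid A) : ℕ :=
  ((FreeMonoid.toList v).reverse.takeWhile fun x => decide (x = a)).length

/-- `d(P)`: the least number of trailing `a`'s among the words in the support of `P`. -/
def dP (a : A) (P : NC K A) : ℕ :=
  sInf {n : ℕ | ∃ v ∈ Finsupp.support P.coeff, trailCount A a v = n}

/-- `e(P)`: the largest number of trailing `a`'s among the words in the support of `P`. -/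
def eP (a : A) (P : NC K A) : ℕ :=
  Finset.sup (Finsupp.support P.coeff) (trailCount A a)

/-- The polynomial `P_i` in the decomposition `P = ∑ P_i b a^i`: it collects (and strips
the suffix `b a^i` from) the monomials of `P` with exactly `i` trailing `a`'s. -/
def partBA (a b : A) (i : ℕ) (P : NC K A) : NC K A :=
  Finsupp.sum P.coeff fun v c =>
    if (FreeMonoid.toList v).reverse.take (i + 1) = List.replicate i a ++ [b] then
      c • wp K A ((FreeMonoid.toList v).take ((FreeMonoid.toList v).length - (i + 1)))
    else 0

/-- A word is Lyndon if it is nonempty and strictly smaller, in the lexicographic order,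
than each of its proper nonempty right factors. -/
def IsLyndon {A : Type*} [LinearOrder A] (w : List A) : Prop :=
  w ≠ [] ∧ ∀ s t : List A, w = t ++ s → t ≠ [] → s ≠ [] → List.Lex (· < ·) w s

/-- `γ(w)`: the nonnegative generator of the ideal `{(P, w) : P ∈ L_ℤ(A)}` of `ℤ`. -/
def gammaW (A : Type*) (w : List A) : ℤ :=
  haveI : (Ideal.span {c : ℤ | ∃ P ∈ freeLie ℤ A, coeffW ℤ A P w = c}).IsPrincipal :=
    IsPrincipalIdealRing.principal _
  (Submodule.IsPrincipal.generator
    (Ideal.span {c : ℤ | ∃ P ∈ freeLie ℤ A, coeffW ℤ A P w = c})).natAbs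

end
section Aux
variable {K A : Type*} [CommRing K]

lemma wp_mul (w w' : List A) : wp K A w * wp K A w' = wp K A (w ++ w') := by
  simp [wp, MonoidAlgebra.single_mul_single]

lemma lam_cons (x : A) (t : List A) (ht : t ≠ []) :
    lam K A (x :: t) =
      lam K A (x :: t.dropLast) * wp K A [t.getLast ht] - lam K A t * wp K A [x] := by
  cases t with
  | nil => exact absurd rfl ht
  | cons c t' => rw [lam]

lemma lam_step (x y : A) (v : List A) :
    lam K A (x :: v ++ [y]) =
      lam K A (x :: v) * wp K A [y] - lam K A (v ++ [y]) * wp K A [x] := by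
  have h := lam_cons (K := K) x (v ++ [y]) (by simp)
  simpa [List.dropLast_concat, List.getLast_append] using h
end Aux

section Sums
variable {K : Type*} [CommRing K] {M : Type*} [AddCommGroup M] [Module K M]

lemma sumA (T : ℕ → ℕ → M) (k l : ℕ) :
    ∑ i ∈ Finset.range (l+2), ((k+1+i).choose i : K) • T (l+1-i) (k+1+i)
  = ∑ i ∈ Finset.range (l+1), ((k+1+i).choose i : K) • T (l-i) (k+1+i+1)
  + ∑ i ∈ Finset.range (l+2), ((k+i).choose i : K) • T (l+1-i) (k+i+1) := by
  rw [Finset.sum_range_succ' (fun i => ((k+1+i).choose i : K) • T (l+1-i) (k+1+i)) (l+1),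
      Finset.sum_range_succ' (fun i => ((k+i).choose i : K) • T (l+1-i) (k+i+1)) (l+1)]
  simp only [Nat.choose_zero_right, Nat.cast_one, one_smul, Nat.add_zero, Nat.sub_zero]
  rw [← add_assoc]
  congr 1
  rw [← Finset.sum_add_distrib]
  refine Finset.sum_congr rfl fun i _ => ?_
  have h1 : l + 1 - (i+1) = l - i := by omega
  have h2 : k+1+(i+1) = (k+1+i)+1 := by omega
  have h3 : k+(i+1)+1 = (k+1+i)+1 := by omega
  have h4 : k+(i+1) = k+i+1 := by omega
  have h6 : k+i+1 = k+1+i := by omega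
  rw [h1, h2, h3, h4, h6, Nat.choose_succ_succ (k+1+i) i, ← add_smul]
  congr 1
  push_cast
  ring

lemma sumB (T : ℕ → ℕ → M) (k l : ℕ) :
    ∑ j ∈ Finset.range (k+2), ((-1:K)^j * ((l+1+j).choose j : K)) • T (k+1-j) (l+1+j)
  = ∑ j ∈ Finset.range (k+2), ((-1:K)^j * ((l+j).choose j : K)) • T (k+1-j) (l+j+1)
  - ∑ j ∈ Finset.range (k+1), ((-1:K)^j * ((l+1+j).choose j : K)) • T (k-j) (l+1+j+1) := by
  rw [Finset.sum_range_succ' (fun j => ((-1:K)^j * ((l+1+j).choose j : K)) • T (k+1-j) (l+1+j)) (k+1),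
      Finset.sum_range_succ' (fun j => ((-1:K)^j * ((l+j).choose j : K)) • T (k+1-j) (l+j+1)) (k+1)]
  simp only [Nat.choose_zero_right, Nat.cast_one, pow_zero, one_mul, one_smul,
    Nat.add_zero, Nat.sub_zero]
  rw [add_sub_right_comm]
  congr 1
  rw [← Finset.sum_sub_distrib]
  refine Finset.sum_congr rfl fun j _ => ?_
  have h1 : k + 1 - (j+1) = k - j := by omega
  have h2 : l+1+(j+1) = (l+1+j)+1 := by omega
  have h3 : l+(j+1)+1 = (l+1+j)+1 := by omega
  have h4 : l+(j+1) = l+j+1 := by omega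
  have h6 : l+j+1 = l+1+j := by omega
  rw [h1, h2, h3, h4, h6, Nat.choose_succ_succ (l+1+j) j, ← sub_smul]
  congr 1
  push_cast
  ring
end Sums

section Cases
variable {K : Type*} [CommRing K] {M : Type*} [AddCommGroup M] [Module K M]

lemma case11 (T1 T2 : ℕ → ℕ → M) (f : M →ₗ[K] M)
    (hf1 : ∀ i m, f (T1 i m) = T1 i (m+1)) (hf2 : ∀ j m, f (T2 j m) = T2 j (m+1)) (k l : ℕ) :
    f ((-1:K)^(k+1+1) • ∑ i ∈ Finset.range (l+1), ((k+1+i).choose i : K) • T1 (l-i) (k+1+i)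
        + ∑ j ∈ Finset.range (k+1+1), ((-1:K)^j * ((l+j).choose j : K)) • T2 (k+1-j) (l+j))
    - f ((-1:K)^(k+1) • ∑ i ∈ Finset.range (l+1+1), ((k+i).choose i : K) • T1 (l+1-i) (k+i)
        + ∑ j ∈ Finset.range (k+1), ((-1:K)^j * ((l+1+j).choose j : K)) • T2 (k-j) (l+1+j))
    = (-1:K)^(k+1+1) • ∑ i ∈ Finset.range (l+1+1), ((k+1+i).choose i : K) • T1 (l+1-i) (k+1+i)
      + ∑ j ∈ Finset.range (k+1+1), ((-1:K)^j * ((l+1+j).choose j : K)) • T2 (k+1-j) (l+1+j) := by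
  simp only [map_add, map_smul, map_sum, hf1, hf2]
  rw [show (l+1+1) = l+2 from rfl, show (k+1+1) = k+2 from rfl, sumA T1 k l, sumB T2 k l]
  have h : (-1:K)^(k+2) = -(-1:K)^(k+1) := by ring
  rw [h]
  module
end Cases

section Cases2
variable {K : Type*} [CommRing K] {M : Type*} [AddCommGroup M] [Module K M]

lemma case00 (T1 T2 : ℕ → ℕ → M) :
    T2 0 0 - T1 0 0
    = (-1:K)^(0+1) • ∑ i ∈ Finset.range (0+1), ((0+i).choose i : K) • T1 (0-i) (0+i)
      + ∑ j ∈ Finset.range (0+1), ((-1:K)^j * ((0+j).choose j : K)) • T2 (0-j) (0+j) := by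
  simp only [Finset.sum_range_one, Nat.choose_zero_right, Nat.cast_one, pow_zero, one_mul,
    Nat.add_zero, Nat.sub_zero, Nat.zero_add, pow_one, one_smul, neg_smul, Nat.zero_sub]
  abel

lemma case01 (T1 T2 : ℕ → ℕ → M) (f : M →ₗ[K] M)
    (hf1 : ∀ i m, f (T1 i m) = T1 i (m+1)) (hf2 : ∀ j m, f (T2 j m) = T2 j (m+1)) (l : ℕ) :
    f ((-1:K)^(0+1) • ∑ i ∈ Finset.range (l+1), ((0+i).choose i : K) • T1 (l-i) (0+i)
        + ∑ j ∈ Finset.range (0+1), ((-1:K)^j * ((l+j).choose j : K)) • T2 (0-j) (l+j))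
    - T1 (l+1) 0
    = (-1:K)^(0+1) • ∑ i ∈ Finset.range (l+1+1), ((0+i).choose i : K) • T1 (l+1-i) (0+i)
      + ∑ j ∈ Finset.range (0+1), ((-1:K)^j * ((l+1+j).choose j : K)) • T2 (0-j) (l+1+j) := by
  simp only [map_add, map_smul, map_sum, hf1, hf2, Finset.sum_range_one, Nat.zero_add,
    Nat.zero_sub, Nat.add_zero, Nat.sub_zero, Nat.choose_zero_right, Nat.choose_self,
    Nat.cast_one, one_smul, pow_zero, one_mul, pow_one, mul_one]
  rw [Finset.sum_range_succ' (fun i => T1 (l+1-i) i) (l+1)]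
  have he : ∀ i, l + 1 - (i+1) = l - i := fun i => by omega
  simp only [he, Nat.sub_zero]
  module

lemma case10 (T1 T2 : ℕ → ℕ → M) (f : M →ₗ[K] M)
    (hf1 : ∀ i m, f (T1 i m) = T1 i (m+1)) (hf2 : ∀ j m, f (T2 j m) = T2 j (m+1)) (k : ℕ) :
    T2 (k+1) 0
    - f ((-1:K)^(k+1) • ∑ i ∈ Finset.range (0+1), ((k+i).choose i : K) • T1 (0-i) (k+i)
        + ∑ j ∈ Finset.range (k+1), ((-1:K)^j * ((0+j).choose j : K)) • T2 (k-j) (0+j))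
    = (-1:K)^(k+1+1) • ∑ i ∈ Finset.range (0+1), ((k+1+i).choose i : K) • T1 (0-i) (k+1+i)
      + ∑ j ∈ Finset.range (k+1+1), ((-1:K)^j * ((0+j).choose j : K)) • T2 (k+1-j) (0+j) := by
  simp only [map_add, map_smul, map_sum, hf1, hf2, Finset.sum_range_one, Nat.zero_add,
    Nat.zero_sub, Nat.add_zero, Nat.sub_zero, Nat.choose_zero_right, Nat.choose_self,
    Nat.cast_one, one_smul, pow_zero, one_mul, mul_one]
  rw [Finset.sum_range_succ' (fun j => ((-1:K)^j) • T2 (k+1-j) j) (k+1)]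
  have he : ∀ j, k + 1 - (j+1) = k - j := fun j => by omega
  simp only [he, Nat.sub_zero, pow_zero, one_smul]
  have h : (-1:K)^(k+1+1) = -(-1:K)^(k+1) := by ring
  rw [h]
  have h2 : ∀ j:ℕ, (-1:K)^(j+1) = -(-1:K)^j := fun j => by ring
  simp only [h2, neg_smul, Finset.sum_neg_distrib]
  module
end Cases2

section Main
variable {K A : Type*} [CommRing K]

lemma main_aux (a b : A) (u : List A) (n : ℕ) :
    ∀ k l : ℕ, k + l ≤ n →
    lam K A (List.replicate k a ++ b :: (u ++ b :: List.replicate l a)) =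
      (-1 : K) ^ (k + 1) •
        (∑ i ∈ Finset.range (l + 1),
          (Nat.choose (k + i) i : K) •
            (lam K A (u ++ b :: List.replicate (l - i) a) *
              wp K A (b :: List.replicate (k + i) a))) +
      ∑ j ∈ Finset.range (k + 1),
        ((-1 : K) ^ j * (Nat.choose (l + j) j : K)) •
          (lam K A (List.replicate (k - j) a ++ b :: u) *
            wp K A (b :: List.replicate (l + j) a)) := by
  set T1 : ℕ → ℕ → NC K A := fun i m =>
    lam K A (u ++ b :: List.replicate i a) * wp K A (b :: List.replicate m a) with hT1
  set T2 : ℕ → ℕ → NC K A := fun j m =>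
    lam K A (List.replicate j a ++ b :: u) * wp K A (b :: List.replicate m a) with hT2
  have hf1 : ∀ i m, (LinearMap.mulRight K (wp K A [a])) (T1 i m) = T1 i (m+1) := by
    intro i m
    simp only [hT1, LinearMap.mulRight_apply, mul_assoc, wp_mul]
    congr 2
    simp [List.replicate_succ']
  have hf2 : ∀ j m, (LinearMap.mulRight K (wp K A [a])) (T2 j m) = T2 j (m+1) := by
    intro j m
    simp only [hT2, LinearMap.mulRight_apply, mul_assoc, wp_mul]
    congr 2
    simp [List.replicate_succ']
  induction n with
  | zero =>
      intro k l h
      obtain rfl : k = 0 := by omega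
      obtain rfl : l = 0 := by omega
      have e1 : List.replicate 0 a ++ b :: (u ++ b :: List.replicate 0 a)
          = b :: u ++ [b] := by simp
      rw [e1, lam_step]
      exact case00 T1 T2
  | succ n ih =>
      intro k l h
      cases k with
      | zero =>
          cases l with
          | zero => exact ih 0 0 (Nat.zero_le n)
          | succ l =>
              have e1 : List.replicate 0 a ++ b :: (u ++ b :: List.replicate (l+1) a)
                  = b :: (u ++ b :: List.replicate l a) ++ [a] := by
                simp [List.replicate_succ']
              rw [e1, lam_step]
              have e2 : (u ++ b :: List.replicate l a) ++ [a]
                  = u ++ b :: List.replicate (l+1) a := by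
                simp [List.replicate_succ']
              rw [e2]
              have h1 : lam K A (b :: (u ++ b :: List.replicate l a)) =
                  (-1 : K) ^ (0 + 1) •
                    (∑ i ∈ Finset.range (l + 1),
                      (Nat.choose (0 + i) i : K) • T1 (l - i) (0 + i)) +
                  ∑ j ∈ Finset.range (0 + 1),
                    ((-1 : K) ^ j * (Nat.choose (l + j) j : K)) • T2 (0 - j) (l + j) :=
                ih 0 l (by omega)
              rw [h1]
              have key := case01 T1 T2 (LinearMap.mulRight K (wp K A [a])) hf1 hf2 l
              simp only [LinearMap.mulRight_apply] at key
              exact key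
      | succ k =>
          cases l with
          | zero =>
              have e1 : List.replicate (k+1) a ++ b :: (u ++ b :: List.replicate 0 a)
                  = a :: (List.replicate k a ++ b :: u) ++ [b] := by
                simp [List.replicate_succ]
              rw [e1, lam_step]
              have e2 : (List.replicate k a ++ b :: u) ++ [b]
                  = List.replicate k a ++ b :: (u ++ b :: List.replicate 0 a) := by
                simp
              rw [e2]
              have h1 : lam K A (List.replicate k a ++ b :: (u ++ b :: List.replicate 0 a)) =
                  (-1 : K) ^ (k + 1) •
                    (∑ i ∈ Finset.range (0 + 1),
                      (Nat.choose (k + i) i : K) • T1 (0 - i) (k + i)) +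
                  ∑ j ∈ Finset.range (k + 1),
                    ((-1 : K) ^ j * (Nat.choose (0 + j) j : K)) • T2 (k - j) (0 + j) :=
                ih k 0 (by omega)
              rw [h1]
              have key := case10 T1 T2 (LinearMap.mulRight K (wp K A [a])) hf1 hf2 k
              simp only [LinearMap.mulRight_apply] at key
              exact key
          | succ l =>
              have e1 : List.replicate (k+1) a ++ b :: (u ++ b :: List.replicate (l+1) a)
                  = a :: (List.replicate k a ++ b :: (u ++ b :: List.replicate l a)) ++ [a] := by
                have hrep : a :: List.replicate l a = List.replicate l a ++ [a] := by
                  rw [← List.replicate_succ, List.replicate_succ']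
                simp [List.replicate_succ, hrep]
              rw [e1, lam_step]
              have h1 : lam K A (a :: (List.replicate k a ++ b :: (u ++ b :: List.replicate l a))) =
                  (-1 : K) ^ (k + 1 + 1) •
                    (∑ i ∈ Finset.range (l + 1),
                      (Nat.choose (k + 1 + i) i : K) • T1 (l - i) (k + 1 + i)) +
                  ∑ j ∈ Finset.range (k + 1 + 1),
                    ((-1 : K) ^ j * (Nat.choose (l + j) j : K)) • T2 (k + 1 - j) (l + j) :=
                ih (k+1) l (by omega)
              have e3 : (List.replicate k a ++ b :: (u ++ b :: List.replicate l a)) ++ [a]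
                  = List.replicate k a ++ b :: (u ++ b :: List.replicate (l+1) a) := by
                simp [List.replicate_succ']
              rw [h1, e3]
              have h2 : lam K A (List.replicate k a ++ b :: (u ++ b :: List.replicate (l+1) a)) =
                  (-1 : K) ^ (k + 1) •
                    (∑ i ∈ Finset.range (l + 1 + 1),
                      (Nat.choose (k + i) i : K) • T1 (l + 1 - i) (k + i)) +
                  ∑ j ∈ Finset.range (k + 1),
                    ((-1 : K) ^ j * (Nat.choose (l + 1 + j) j : K)) • T2 (k - j) (l + 1 + j) :=
                ih k (l+1) (by omega)
              rw [h2]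
              have key := case11 T1 T2 (LinearMap.mulRight K (wp K A [a])) hf1 hf2 k l
              simp only [LinearMap.mulRight_apply] at key
              exact key
end Main

theorem lam_pascal_recursion
    (K A : Type*) [CommRing K] (a b : A) (hab : a ≠ b)
    (u : List A) (hu : ∀ c ∈ u, c = a ∨ c = b) (k l : ℕ) :
    lam K A (List.replicate k a ++ b :: (u ++ b :: List.replicate l a)) =
      (-1 : K) ^ (k + 1) •
        (∑ i ∈ Finset.range (l + 1),
          (Nat.choose (k + i) i : K) •
            (lam K A (u ++ b :: List.replicate (l - i) a) *
              wp K A (b :: List.replicate (k + i) a))) +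
      ∑ j ∈ Finset.range (k + 1),
        ((-1 : K) ^ j * (Nat.choose (l + j) j : K)) •
          (lam K A (List.replicate (k - j) a ++ b :: u) *
            wp K A (b :: List.replicate (l + j) a)) :=
  main_aux a b u (k + l) k l le_rfl
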